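/- Let P be a convex polygon in the affine plane with vertices (x_i, y_i) in counterclockwise order, and define the vector d_P = Σ_i d_i / A_i where d_i is the vector from vertex i−1 to vertex i+1 and A_i > 0 is the area of triangle (i−1, i, i+1). Then the projective map induced by Glick's operator G_P maps the line at infinity to itself (i.e., is an affine map in the chart z = 1) if and only if d_P = 0. -/

import Mathlib

/-!
STATEMENT 6. For a convex polygon `P` with counterclockwise vertices `p i`,
Glick's operator `G_P` (with vertex lifts `(x i, y i, 1)`) induces an affine
projective map, i.e. maps the line at infinity `{z = 0}` to itself, if and
only if the vector `d_P = ∑ i d_i / A i` vanishes, where `d_i` is the vector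
from vertex `i − 1` to vertex `i + 1` and `A i > 0` is the area of triangle
`(i−1, i, i+1)`.
-/

/-- Planar cross product. -/
def cross2 (a b : ℝ × ℝ) : ℝ := a.1 * b.2 - a.2 * b.1

/-- `p` is a strictly convex polygon with vertices labeled counterclockwise. -/
def ConvexCCW {n : ℕ} [NeZero n] (p : Fin n → ℝ × ℝ) : Prop :=
  ∀ i j : Fin n, j ≠ i → j ≠ i + 1 → 0 < cross2 (p (i + 1) - p i) (p j - p i)

/-- Determinant of three vectors in `ℝ³`. -/
def det3 (a b c : Fin 3 → ℝ) : ℝ :=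
  a 0 * (b 1 * c 2 - b 2 * c 1) - a 1 * (b 0 * c 2 - b 2 * c 0)
    + a 2 * (b 0 * c 1 - b 1 * c 0)

/-- Glick's operator of a polygon with vertex lifts `v`. -/
noncomputable def glick {n : ℕ} [NeZero n] (v : Fin n → Fin 3 → ℝ)
    (x : Fin 3 → ℝ) : Fin 3 → ℝ :=
  (n : ℝ) • x -
    ∑ i : Fin n,
      (det3 (v (i - 1)) x (v (i + 1)) / det3 (v (i - 1)) (v i) (v (i + 1))) • v i

theorem glick_affine_iff_dP_zero
    {n : ℕ} [NeZero n] (hn : 3 ≤ n)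
    (p : Fin n → ℝ × ℝ) (hconv : ConvexCCW p) :
    -- `G_P` preserves the line at infinity (i.e. is affine in the chart `z = 1`)
    (∀ x y : ℝ, glick (fun i => ![(p i).1, (p i).2, 1]) ![x, y, 0] 2 = 0)
      ↔
    -- ... if and only if  `d_P = ∑ i (1 / A i) • d_i = 0`
    (∑ i : Fin n,
        (cross2 (p i - p (i - 1)) (p (i + 1) - p i) / 2)⁻¹ •
          (p (i + 1) - p (i - 1))) = 0 := by
  set A : Fin n → ℝ := fun i => cross2 (p i - p (i - 1)) (p (i + 1) - p i) with hAdef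
  -- positivity of areas
  have hA : ∀ i, 0 < A i := by
    intro i
    have hne1 : i + 1 ≠ i - 1 := by
      intro h
      rw [← sub_eq_zero] at h
      have h2 : (2 : Fin n) = 0 := by rw [← h]; open Fin.CommRing in ring
      have h3 : ((2 : Fin n) : ℕ) = 2 := by
        have := Fin.val_cast_of_lt (a := 2) (by omega : 2 < n)
        simpa using this
      rw [h2] at h3; simp at h3
    have hne2 : i + 1 ≠ (i - 1) + 1 := by
      rw [sub_add_cancel]
      intro h
      have h2 : (1 : Fin n) = 0 := by
        have := add_left_cancel (a := i) (b := 1) (c := 0) (by simpa using h)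
        exact this
      have h3 : ((1 : Fin n) : ℕ) = 1 := by
        have := Fin.val_cast_of_lt (a := 1) (by omega : 1 < n)
        simpa using this
      rw [h2] at h3; simp at h3
    have h := hconv (i - 1) (i + 1) hne1 hne2
    rw [sub_add_cancel] at h
    have heq : cross2 (p i - p (i - 1)) (p (i + 1) - p (i - 1)) = A i := by
      simp only [hAdef, cross2, Prod.fst_sub, Prod.snd_sub]; ring
    rw [heq] at h; exact h
  have hA0 : ∀ i, A i ≠ 0 := fun i => (hA i).ne'
  set v : Fin n → Fin 3 → ℝ := fun i => ![(p i).1, (p i).2, 1] with hvdef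
  have hD : ∀ i, det3 (v (i - 1)) (v i) (v (i + 1)) = A i := by
    intro i
    simp only [hvdef, hAdef, det3, cross2, Prod.fst_sub, Prod.snd_sub,
      Matrix.cons_val_zero, Matrix.cons_val_one, Matrix.head_cons,
      Matrix.cons_val_two, Matrix.tail_cons]
    ring
  -- the z-coordinate formula
  have hz : ∀ X Y : ℝ, glick v ![X, Y, 0] 2 =
      -∑ i : Fin n,
        (X * ((p (i + 1)).2 - (p (i - 1)).2) + Y * ((p (i - 1)).1 - (p (i + 1)).1)) / A i := by
    intro X Y
    simp only [glick, Pi.sub_apply, Pi.smul_apply, Finset.sum_apply, smul_eq_mul]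
    rw [show (![X, Y, 0] : Fin 3 → ℝ) 2 = 0 from rfl]
    have hterm : ∀ i : Fin n,
        det3 (v (i - 1)) ![X, Y, 0] (v (i + 1)) / det3 (v (i - 1)) (v i) (v (i + 1)) * v i 2
          = (X * ((p (i + 1)).2 - (p (i - 1)).2) + Y * ((p (i - 1)).1 - (p (i + 1)).1)) / A i := by
      intro i
      rw [hD, show v i 2 = 1 from rfl, mul_one]
      congr 1
      simp only [hvdef, det3, Matrix.cons_val_zero, Matrix.cons_val_one, Matrix.head_cons,
        Matrix.cons_val_two, Matrix.tail_cons]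
      ring
    rw [Finset.sum_congr rfl (fun i _ => hterm i)]
    ring
  constructor
  · intro h
    have h1 := h 1 0
    have h2 := h 0 1
    rw [hz] at h1 h2
    simp only [one_mul, zero_mul, add_zero, zero_add, neg_eq_zero] at h1 h2
    apply Prod.ext
    · simp only [Prod.fst_sum, Prod.smul_fst, Prod.fst_sub, smul_eq_mul, Prod.fst_zero]
      have : ∀ i : Fin n, (A i / 2)⁻¹ * ((p (i + 1)).1 - (p (i - 1)).1)
          = (-2) * (((p (i - 1)).1 - (p (i + 1)).1) / A i) := by
        intro i; rw [inv_div]; ring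
      rw [Finset.sum_congr rfl (fun i _ => this i), ← Finset.mul_sum, h2, mul_zero]
    · simp only [Prod.snd_sum, Prod.smul_snd, Prod.snd_sub, smul_eq_mul, Prod.snd_zero]
      have : ∀ i : Fin n, (A i / 2)⁻¹ * ((p (i + 1)).2 - (p (i - 1)).2)
          = 2 * (((p (i + 1)).2 - (p (i - 1)).2) / A i) := by
        intro i; rw [inv_div]; ring
      rw [Finset.sum_congr rfl (fun i _ => this i), ← Finset.mul_sum, h1, mul_zero]
  · intro h X Y
    have hx : (∑ i : Fin n, (A i / 2)⁻¹ • (p (i + 1) - p (i - 1))).1 = 0 := by rw [h]; rfl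
    have hy : (∑ i : Fin n, (A i / 2)⁻¹ • (p (i + 1) - p (i - 1))).2 = 0 := by rw [h]; rfl
    simp only [Prod.fst_sum, Prod.smul_fst, Prod.fst_sub, smul_eq_mul] at hx
    simp only [Prod.snd_sum, Prod.smul_snd, Prod.snd_sub, smul_eq_mul] at hy
    rw [hz, neg_eq_zero]
    have : ∀ i : Fin n,
        (X * ((p (i + 1)).2 - (p (i - 1)).2) + Y * ((p (i - 1)).1 - (p (i + 1)).1)) / A i
          = (X / 2) * ((A i / 2)⁻¹ * ((p (i + 1)).2 - (p (i - 1)).2))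
            + (-Y / 2) * ((A i / 2)⁻¹ * ((p (i + 1)).1 - (p (i - 1)).1)) := by
      intro i; rw [inv_div]; field_simp; ring
    rw [Finset.sum_congr rfl (fun i _ => this i), Finset.sum_add_distrib,
      ← Finset.mul_sum, ← Finset.mul_sum, hx, hy, mul_zero, mul_zero, add_zero]
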